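/- Let G be a simple graph on n vertices with maximum subgraph spectral density t = t(G). If k ≥ √(8n)/(1−t), then BC_k(G) holds. Equivalently, any k for which BC_k(G) fails satisfies m/n < k < √(8n)/(1−t), where m is the number of edges of G. -/

import Mathlib

open Finset

namespace Brouwer

variable {V : Type*}

/-- The sum of the `k` largest values of `f` on a finite type, expressed as the
supremum over all `k`-element subsets of the sum of `f` over the subset. -/
noncomputable def sumKLargest [Fintype V] (f : V → ℝ) (k : ℕ) : ℝ :=
  sSup { x : ℝ | ∃ T : Finset V, T.card = k ∧ ∑ i ∈ T, f i = x }

/-- The Laplacian matrix of a finite simple graph is Hermitian (real symmetric). -/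
theorem lapMatrix_isHermitian [Fintype V] [DecidableEq V] (G : SimpleGraph V)
    [DecidableRel G.Adj] : (G.lapMatrix ℝ).IsHermitian := by
  rw [Matrix.IsHermitian, Matrix.conjTranspose_eq_transpose_of_trivial]
  exact G.isSymm_lapMatrix (R := ℝ)

/-- The adjacency matrix of a finite simple graph is Hermitian (real symmetric). -/
theorem adjMatrix_isHermitian [Fintype V] [DecidableEq V] (G : SimpleGraph V)
    [DecidableRel G.Adj] : (G.adjMatrix ℝ).IsHermitian := by
  rw [Matrix.IsHermitian, Matrix.conjTranspose_eq_transpose_of_trivial]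
  exact G.isSymm_adjMatrix

/-- The (multiset of) eigenvalues of the Laplacian matrix of `G`, indexed by vertices. -/
noncomputable def lapEig [Fintype V] [DecidableEq V] (G : SimpleGraph V) : V → ℝ := by
  classical exact (lapMatrix_isHermitian G).eigenvalues

/-- The (multiset of) eigenvalues of the adjacency matrix of `G`, indexed by vertices. -/
noncomputable def adjEig [Fintype V] [DecidableEq V] (G : SimpleGraph V) : V → ℝ := by
  classical exact (adjMatrix_isHermitian G).eigenvalues

/-- `sLap G k` is `s_k(G)`, the sum of the `k` largest Laplacian eigenvalues of `G`. -/
noncomputable def sLap [Fintype V] [DecidableEq V] (G : SimpleGraph V) (k : ℕ) : ℝ :=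
  sumKLargest (lapEig G) k

/-- The number of edges of `G`. -/
noncomputable def numEdges [Fintype V] (G : SimpleGraph V) : ℕ := by
  classical exact G.edgeFinset.card

/-- `BC G k`: Brouwer's conjectured inequality `s_k(G) ≤ m + (k+1 choose 2)`. -/
def BC [Fintype V] [DecidableEq V] (G : SimpleGraph V) (k : ℕ) : Prop :=
  sLap G k ≤ numEdges G + (k + 1).choose 2

/-- Number of edges of `G` with both endpoints in `S`. -/
noncomputable def edgesWithin [Fintype V] [DecidableEq V] (G : SimpleGraph V)
    (S : Finset V) : ℕ := by
  classical exact (G.edgeFinset.filter (fun e => ∀ v ∈ e, v ∈ S)).card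

/-- The adjacency spectral radius of `G`, i.e. the largest adjacency eigenvalue. -/
noncomputable def specRad [Fintype V] [DecidableEq V] (G : SimpleGraph V) : ℝ :=
  sumKLargest (adjEig G) 1

/-- The maximum subgraph spectral density `t(G)`:
the supremum of `ρ(G[S])/|S|` over nonempty vertex subsets `S`. -/
noncomputable def maxDensity [Fintype V] [DecidableEq V] (G : SimpleGraph V) : ℝ :=
  sSup { x : ℝ | ∃ S : Finset V, S.Nonempty ∧
    x = specRad (G.induce (↑S : Set V)) / (S.card : ℝ) }

/-- Edge-edit distance between two graphs on the same vertex set. -/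
noncomputable def editDistance [Fintype V] (G H : SimpleGraph V) : ℕ := by
  classical exact (symmDiff G.edgeFinset H.edgeFinset).card

/-- A split graph: the vertex set partitions into a clique and an independent set. -/
def IsSplit (G : SimpleGraph V) : Prop :=
  ∃ C : Set V, G.IsClique C ∧ Gᶜ.IsClique Cᶜ

/-- The splittance of `G`: the least number of edge edits needed to reach a split graph. -/
noncomputable def splittance [Fintype V] (G : SimpleGraph V) : ℕ :=
  sInf { d : ℕ | ∃ H : SimpleGraph V, IsSplit H ∧ editDistance G H = d }

/-- The join `G + K₁` of `G` with one new vertex adjacent to every vertex of `G`. -/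
def joinOne (G : SimpleGraph V) : SimpleGraph (Option V) where
  Adj x y := x ≠ y ∧ ∀ a, x = some a → ∀ b, y = some b → G.Adj a b
  symm := ⟨by
    rintro x y ⟨hxy, h⟩
    exact ⟨hxy.symm, fun a ha b hb => (h b hb a ha).symm⟩⟩
  loopless := ⟨by rintro x ⟨hxx, -⟩; exact hxx rfl⟩

open Matrix

set_option linter.unusedSectionVars false
set_option linter.unreachableTactic false
set_option linter.unusedTactic false

section Spec
variable {W : Type*} [Fintype W] [DecidableEq W] {M : Matrix W W ℝ} (hM : M.IsHermitian)

/-- quadratic form as a double sum -/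
noncomputable def quad (M : Matrix W W ℝ) (x : W → ℝ) : ℝ := ∑ u, ∑ w, x u * M u w * x w

lemma eB_orth (i j : W) :
    ∑ u, hM.eigenvectorBasis i u * hM.eigenvectorBasis j u = if i = j then 1 else 0 := by
  have h := orthonormal_iff_ite.mp hM.eigenvectorBasis.orthonormal i j
  rw [PiLp.inner_apply] at h
  simpa [RCLike.inner_apply, mul_comm] using h

lemma eB_rows (u w : W) :
    ∑ i, hM.eigenvectorBasis i u * hM.eigenvectorBasis i w = if u = w then 1 else 0 := by
  classical
  set P : Matrix W W ℝ := Matrix.of (fun i u => hM.eigenvectorBasis i u) with hP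
  have h1 : P * Pᵀ = 1 := by
    ext i j
    simp only [Matrix.mul_apply, Matrix.transpose_apply, Matrix.one_apply, hP, Matrix.of_apply]
    exact eB_orth hM i j
  have h2 : Pᵀ * P = 1 := mul_eq_one_comm.mp h1
  have h3 := congrFun (congrFun h2 u) w
  simpa [Matrix.mul_apply, Matrix.one_apply, hP] using h3

lemma mulVec_eB (i : W) (u : W) :
    ∑ w, M u w * hM.eigenvectorBasis i w = hM.eigenvalues i * hM.eigenvectorBasis i u := by
  have := congrFun (hM.mulVec_eigenvectorBasis i) u
  simpa [Matrix.mulVec, dotProduct] using this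

lemma sum_self_eB (i : W) : ∑ u, hM.eigenvectorBasis i u * hM.eigenvectorBasis i u = 1 := by
  simpa using eB_orth hM i i

lemma quad_eB (i : W) : quad M (hM.eigenvectorBasis i) = hM.eigenvalues i := by
  unfold quad
  have h : ∀ u, ∑ w, hM.eigenvectorBasis i u * M u w * hM.eigenvectorBasis i w
      = hM.eigenvalues i * (hM.eigenvectorBasis i u * hM.eigenvectorBasis i u) := by
    intro u
    simp_rw [mul_assoc, ← Finset.mul_sum]
    rw [mulVec_eB hM i u]
    ring
  simp_rw [h, ← Finset.mul_sum, sum_self_eB hM i, mul_one]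

/-- Rayleigh-type upper bound. -/
lemma quad_le_of_eig_le {B : ℝ} (hB : ∀ i, hM.eigenvalues i ≤ B) (x : W → ℝ) :
    quad M x ≤ B * ∑ u, (x u)^2 := by
  classical
  set c : W → ℝ := fun i => ∑ u, hM.eigenvectorBasis i u * x u with hc
  have hxu : ∀ u, ∑ i, c i * hM.eigenvectorBasis i u = x u := by
    intro u
    calc ∑ i, c i * hM.eigenvectorBasis i u
        = ∑ i, ∑ w, hM.eigenvectorBasis i w * x w * hM.eigenvectorBasis i u := by
          refine Finset.sum_congr rfl fun i _ => ?_
          rw [hc, Finset.sum_mul]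
      _ = ∑ w, ∑ i, hM.eigenvectorBasis i w * x w * hM.eigenvectorBasis i u :=
          Finset.sum_comm
      _ = ∑ w, x w * ∑ i, hM.eigenvectorBasis i w * hM.eigenvectorBasis i u := by
          refine Finset.sum_congr rfl fun w _ => ?_
          rw [Finset.mul_sum]
          exact Finset.sum_congr rfl fun i _ => by ring
      _ = x u := by simp [eB_rows hM]
  have hpar : ∑ i, (c i)^2 = ∑ u, (x u)^2 := by
    calc ∑ i, (c i)^2
        = ∑ i, ∑ u, hM.eigenvectorBasis i u * x u * c i := by
          refine Finset.sum_congr rfl fun i _ => ?_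
          rw [pow_two]
          conv_lhs => rw [hc]
          rw [Finset.sum_mul]
      _ = ∑ u, ∑ i, hM.eigenvectorBasis i u * x u * c i := Finset.sum_comm
      _ = ∑ u, x u * ∑ i, c i * hM.eigenvectorBasis i u := by
          refine Finset.sum_congr rfl fun u _ => ?_
          rw [Finset.mul_sum]
          exact Finset.sum_congr rfl fun i _ => by ring
      _ = ∑ u, (x u)^2 := by
          refine Finset.sum_congr rfl fun u _ => ?_
          rw [hxu u, pow_two]
  have hqd : quad M x = ∑ i, hM.eigenvalues i * (c i)^2 := by
    unfold quad
    have h2 : ∀ u, ∑ w, M u w * x w = ∑ i, c i * (hM.eigenvalues i * hM.eigenvectorBasis i u) := by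
      intro u
      calc ∑ w, M u w * x w
          = ∑ w, M u w * ∑ i, c i * hM.eigenvectorBasis i w := by
            refine Finset.sum_congr rfl fun w _ => ?_
            rw [hxu w]
        _ = ∑ w, ∑ i, c i * (M u w * hM.eigenvectorBasis i w) := by
            refine Finset.sum_congr rfl fun w _ => ?_
            rw [Finset.mul_sum]
            exact Finset.sum_congr rfl fun i _ => by ring
        _ = ∑ i, ∑ w, c i * (M u w * hM.eigenvectorBasis i w) := Finset.sum_comm
        _ = ∑ i, c i * (hM.eigenvalues i * hM.eigenvectorBasis i u) := by
            refine Finset.sum_congr rfl fun i _ => ?_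
            rw [← Finset.mul_sum, mulVec_eB hM i u]
    calc ∑ u, ∑ w, x u * M u w * x w
        = ∑ u, x u * ∑ w, M u w * x w := by
          refine Finset.sum_congr rfl fun u _ => ?_
          rw [Finset.mul_sum]
          exact Finset.sum_congr rfl fun w _ => by ring
      _ = ∑ u, ∑ i, x u * (c i * (hM.eigenvalues i * hM.eigenvectorBasis i u)) := by
          refine Finset.sum_congr rfl fun u _ => ?_
          rw [h2 u, Finset.mul_sum]
      _ = ∑ i, ∑ u, x u * (c i * (hM.eigenvalues i * hM.eigenvectorBasis i u)) :=
          Finset.sum_comm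
      _ = ∑ i, hM.eigenvalues i * c i * ∑ u, hM.eigenvectorBasis i u * x u := by
          refine Finset.sum_congr rfl fun i _ => ?_
          rw [Finset.mul_sum]
          exact Finset.sum_congr rfl fun u _ => by ring
      _ = ∑ i, hM.eigenvalues i * (c i)^2 := by
          refine Finset.sum_congr rfl fun i _ => ?_
          have : ∑ u, hM.eigenvectorBasis i u * x u = c i := by rw [hc]
          rw [this, pow_two]
          ring
  calc quad M x = ∑ i, hM.eigenvalues i * (c i)^2 := hqd
    _ ≤ ∑ i, B * (c i)^2 :=
        Finset.sum_le_sum fun i _ => mul_le_mul_of_nonneg_right (hB i) (sq_nonneg _)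
    _ = B * ∑ i, (c i)^2 := by rw [Finset.mul_sum]
    _ = B * ∑ u, (x u)^2 := by rw [hpar]

/-- Frobenius-type identity for an orthonormal system. -/
lemma frob (v : W → W → ℝ) (hrows : ∀ u w, ∑ i, v i u * v i w = if u = w then 1 else 0)
    (N : Matrix W W ℝ) :
    ∑ i, ∑ u, (∑ w, N u w * v i w)^2 = ∑ u, ∑ w, (N u w)^2 := by
  classical
  rw [Finset.sum_comm]
  refine Finset.sum_congr rfl fun u _ => ?_
  calc ∑ i, (∑ w, N u w * v i w)^2
      = ∑ i, ∑ w, ∑ w', (N u w * v i w) * (N u w' * v i w') := by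
        refine Finset.sum_congr rfl fun i _ => ?_
        rw [pow_two, Finset.sum_mul_sum]
    _ = ∑ w, ∑ i, ∑ w', (N u w * v i w) * (N u w' * v i w') := Finset.sum_comm
    _ = ∑ w, ∑ w', ∑ i, (N u w * v i w) * (N u w' * v i w') := by
        refine Finset.sum_congr rfl fun w _ => ?_
        exact Finset.sum_comm
    _ = ∑ w, ∑ w', N u w * N u w' * ∑ i, v i w * v i w' := by
        refine Finset.sum_congr rfl fun w _ => Finset.sum_congr rfl fun w' _ => ?_
        rw [Finset.mul_sum]
        exact Finset.sum_congr rfl fun i _ => by ring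
    _ = ∑ w, (N u w)^2 := by
        simp [hrows, mul_ite, pow_two]

end Spec

section Graph
variable [Fintype V] [DecidableEq V] (G : SimpleGraph V) [inst : DecidableRel G.Adj]

lemma adjEig_eq : adjEig G = (adjMatrix_isHermitian G).eigenvalues := by
  have h : (fun a b => Classical.propDecidable (G.Adj a b) : DecidableRel G.Adj) = inst :=
    Subsingleton.elim _ _
  rw [← h]; rfl

lemma lapEig_eq : lapEig G = (lapMatrix_isHermitian G).eigenvalues := by
  have h : (fun a b => Classical.propDecidable (G.Adj a b) : DecidableRel G.Adj) = inst :=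
    Subsingleton.elim _ _
  rw [← h]; rfl

lemma numEdges_eq [Fintype G.edgeSet] : numEdges G = G.edgeFinset.card := by
  unfold numEdges
  have : ∀ (i1 i2 : Fintype G.edgeSet), (@SimpleGraph.edgeFinset V G i1).card
      = (@SimpleGraph.edgeFinset V G i2).card := by
    intro i1 i2
    rw [Subsingleton.elim i1 i2]
  exact this _ _

lemma sum_adj_eq_twice_numEdges :
    ∑ u, ∑ w, (G.adjMatrix ℝ) u w = 2 * (numEdges G : ℝ) := by
  have h1 : ∀ u, ∑ w, (G.adjMatrix ℝ) u w = (G.degree u : ℝ) := by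
    intro u
    rw [G.degree_eq_sum_if_adj u]
    simp [SimpleGraph.adjMatrix_apply]
  have h2 : ∑ u, (G.degree u : ℝ) = 2 * (numEdges G : ℝ) := by
    rw [numEdges_eq G]
    rw [← Nat.cast_sum]
    rw [SimpleGraph.sum_degrees_eq_twice_card_edges]
    push_cast
    ring
  simp_rw [h1]
  exact h2

lemma row_sum_eq_degree (u : V) : ∑ w, (G.adjMatrix ℝ) u w = (G.degree u : ℝ) := by
  rw [G.degree_eq_sum_if_adj u]
  simp [SimpleGraph.adjMatrix_apply]

lemma quadL_decomp (x : V → ℝ) :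
    quad (G.lapMatrix ℝ) x
      = ∑ u, (∑ w, (G.adjMatrix ℝ) u w) * (x u)^2 - quad (G.adjMatrix ℝ) x := by
  unfold quad
  have hent : ∀ u w, (G.lapMatrix ℝ) u w
      = (if u = w then (G.degree u : ℝ) else 0) - (G.adjMatrix ℝ) u w := by
    intro u w
    rw [SimpleGraph.lapMatrix, Matrix.sub_apply, SimpleGraph.degMatrix, Matrix.diagonal_apply]
  have h1 : ∀ u, ∑ w, x u * (G.lapMatrix ℝ) u w * x w
      = (∑ w, (G.adjMatrix ℝ) u w) * (x u)^2 - ∑ w, x u * (G.adjMatrix ℝ) u w * x w := by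
    intro u
    have : ∀ w, x u * (G.lapMatrix ℝ) u w * x w
        = x u * (if u = w then (G.degree u : ℝ) else 0) * x w
          - x u * (G.adjMatrix ℝ) u w * x w := by
      intro w; rw [hent]; ring
    simp_rw [this, Finset.sum_sub_distrib]
    congr 1
    rw [row_sum_eq_degree G u]
    simp [mul_ite, ite_mul, Finset.sum_ite_eq]
    ring
  simp_rw [h1, Finset.sum_sub_distrib]

lemma sum_plus_one_le : ∀ a b : ℝ, 0 ≤ a → a ≤ 1 → 0 ≤ b → b ≤ 1 → a + b ≤ 1 + a * b := by
  intro a b h1 h2 h3 h4; nlinarith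

lemma deg_quad (z : V → ℝ) (hz0 : ∀ u, 0 ≤ z u) (hz1 : ∀ u, z u ≤ 1) :
    ∑ u, (∑ w, (G.adjMatrix ℝ) u w) * z u
      ≤ (numEdges G : ℝ) + quad (G.adjMatrix ℝ) z / 2 := by
  have hAsym : ∀ u w, (G.adjMatrix ℝ) u w = (G.adjMatrix ℝ) w u := by
    intro u w; simp [SimpleGraph.adjMatrix_apply, G.adj_comm]
  have key : ∑ u, (∑ w, (G.adjMatrix ℝ) u w) * z u
      = (∑ u, ∑ w, (G.adjMatrix ℝ) u w * (z u + z w)) / 2 := by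
    have e1 : ∑ u, (∑ w, (G.adjMatrix ℝ) u w) * z u
        = ∑ u, ∑ w, (G.adjMatrix ℝ) u w * z u := by
      refine Finset.sum_congr rfl fun u _ => ?_; rw [Finset.sum_mul]
    have e2 : ∑ u, ∑ w, (G.adjMatrix ℝ) u w * z u
        = ∑ u, ∑ w, (G.adjMatrix ℝ) u w * z w := by
      rw [Finset.sum_comm]
      refine Finset.sum_congr rfl fun u _ => Finset.sum_congr rfl fun w _ => ?_
      rw [hAsym u w]
    have e3 : ∑ u, ∑ w, (G.adjMatrix ℝ) u w * (z u + z w)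
        = (∑ u, ∑ w, (G.adjMatrix ℝ) u w * z u) + ∑ u, ∑ w, (G.adjMatrix ℝ) u w * z w := by
      rw [← Finset.sum_add_distrib]
      refine Finset.sum_congr rfl fun u _ => ?_
      rw [← Finset.sum_add_distrib]
      refine Finset.sum_congr rfl fun w _ => ?_
      ring
    rw [e1, e3, ← e2]
    ring
  rw [key]
  have hb : ∑ u, ∑ w, (G.adjMatrix ℝ) u w * (z u + z w)
      ≤ ∑ u, ∑ w, (G.adjMatrix ℝ) u w * (1 + z u * z w) := by
    refine Finset.sum_le_sum fun u _ => Finset.sum_le_sum fun w _ => ?_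
    refine mul_le_mul_of_nonneg_left ?_ (by simp [SimpleGraph.adjMatrix_apply]; positivity)
    exact sum_plus_one_le _ _ (hz0 u) (hz1 u) (hz0 w) (hz1 w)
  have hsplit : ∑ u, ∑ w, (G.adjMatrix ℝ) u w * (1 + z u * z w)
      = 2 * (numEdges G : ℝ) + quad (G.adjMatrix ℝ) z := by
    have : ∀ u w, (G.adjMatrix ℝ) u w * (1 + z u * z w)
        = (G.adjMatrix ℝ) u w + z u * (G.adjMatrix ℝ) u w * z w := by
      intro u w; ring
    simp_rw [this, Finset.sum_add_distrib]
    rw [sum_adj_eq_twice_numEdges G]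
    rfl
  calc (∑ u, ∑ w, (G.adjMatrix ℝ) u w * (z u + z w)) / 2
      ≤ (2 * (numEdges G : ℝ) + quad (G.adjMatrix ℝ) z) / 2 := by
        rw [← hsplit]; linarith [hb]
    _ = (numEdges G : ℝ) + quad (G.adjMatrix ℝ) z / 2 := by ring

end Graph


section Graph2
variable {W : Type*} [Fintype W] [DecidableEq W] (H : SimpleGraph W) [DecidableRel H.Adj]

lemma bddAbove_sumK (f : W → ℝ) (k : ℕ) :
    BddAbove {x : ℝ | ∃ T : Finset W, T.card = k ∧ ∑ i ∈ T, f i = x} := by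
  apply Set.Finite.bddAbove
  apply (Set.finite_range (fun T : Finset W => ∑ i ∈ T, f i)).subset
  rintro x ⟨T, -, rfl⟩
  exact ⟨T, rfl⟩

lemma adjEig_le_specRad (i : W) : adjEig H i ≤ specRad H := by
  refine le_csSup (bddAbove_sumK _ 1) ⟨{i}, Finset.card_singleton i, ?_⟩
  exact Finset.sum_singleton _ i

lemma specRad_le {B : ℝ} [Nonempty W] (h : ∀ i, adjEig H i ≤ B) : specRad H ≤ B := by
  refine csSup_le ⟨adjEig H (Classical.arbitrary W), {Classical.arbitrary W},
    Finset.card_singleton _, Finset.sum_singleton _ _⟩ ?_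
  rintro x ⟨T, hT, rfl⟩
  obtain ⟨i, rfl⟩ := Finset.card_eq_one.mp hT
  simpa using h i

lemma quadA_le_card (x : W → ℝ) :
    quad (H.adjMatrix ℝ) x ≤ ((Fintype.card W : ℝ) - 1) * ∑ u, (x u)^2 := by
  have step1 : quad (H.adjMatrix ℝ) x
      ≤ ∑ u, ∑ w, (if u = w then 0 else |x u| * |x w|) := by
    refine Finset.sum_le_sum fun u _ => Finset.sum_le_sum fun w _ => ?_
    by_cases h : u = w
    · subst h
      simp [SimpleGraph.adjMatrix_apply]
    · rw [if_neg h]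
      have hA0 : (0:ℝ) ≤ (H.adjMatrix ℝ) u w := by
        simp only [SimpleGraph.adjMatrix_apply]; positivity
      have hA1 : (H.adjMatrix ℝ) u w ≤ 1 := by
        simp only [SimpleGraph.adjMatrix_apply]; split <;> norm_num
      calc x u * (H.adjMatrix ℝ) u w * x w
          = (H.adjMatrix ℝ) u w * (x u * x w) := by ring
        _ ≤ (H.adjMatrix ℝ) u w * |x u * x w| :=
            mul_le_mul_of_nonneg_left (le_abs_self _) hA0
        _ ≤ 1 * |x u * x w| := mul_le_mul_of_nonneg_right hA1 (abs_nonneg _)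
        _ = |x u| * |x w| := by rw [one_mul, abs_mul]
  have step2 : ∑ u, ∑ w, (if u = w then 0 else |x u| * |x w|)
      = (∑ u, |x u|)^2 - ∑ u, (x u)^2 := by
    have per : ∀ u, ∑ w, (if u = w then 0 else |x u| * |x w|)
        = |x u| * (∑ w, |x w|) - (x u)^2 := by
      intro u
      have e : ∀ w, (if u = w then 0 else |x u| * |x w|)
          = |x u| * |x w| - (if u = w then |x u| * |x w| else 0) := by
        intro w; split <;> ring
      simp_rw [e, Finset.sum_sub_distrib, Finset.sum_ite_eq, Finset.mul_sum]
      simp [sq_abs, pow_two, mul_comm]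
    simp_rw [per, Finset.sum_sub_distrib]
    congr 1
    rw [pow_two, ← Finset.sum_mul]
  have step3 : (∑ u, |x u|)^2 ≤ (Fintype.card W : ℝ) * ∑ u, (x u)^2 := by
    have := sq_sum_le_card_mul_sum_sq (s := (univ : Finset W)) (f := fun u => |x u|)
    simpa [sq_abs, Finset.card_univ] using this
  calc quad (H.adjMatrix ℝ) x ≤ (∑ u, |x u|)^2 - ∑ u, (x u)^2 := by
        rw [← step2]; exact step1
    _ ≤ (Fintype.card W : ℝ) * ∑ u, (x u)^2 - ∑ u, (x u)^2 := by linarith [step3]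
    _ = ((Fintype.card W : ℝ) - 1) * ∑ u, (x u)^2 := by ring

lemma adjEig_le_card_sub_one (i : W) : adjEig H i ≤ (Fintype.card W : ℝ) - 1 := by
  rw [adjEig_eq H]
  have hx := quad_eB (adjMatrix_isHermitian H) i
  rw [← hx]
  have hnorm : ∑ u, ((adjMatrix_isHermitian H).eigenvectorBasis i u)^2 = 1 := by
    have := sum_self_eB (adjMatrix_isHermitian H) i
    simpa [pow_two] using this
  have hq := quadA_le_card H (fun u => (adjMatrix_isHermitian H).eigenvectorBasis i u)
  rw [hnorm] at hq
  simpa using hq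

lemma specRad_le_card_sub_one [Nonempty W] : specRad H ≤ (Fintype.card W : ℝ) - 1 :=
  specRad_le H (adjEig_le_card_sub_one H)

end Graph2


section Density
variable [Fintype V] [DecidableEq V] (G : SimpleGraph V)

lemma bddAbove_dens : BddAbove { x : ℝ | ∃ S : Finset V, S.Nonempty ∧
    x = specRad (G.induce (↑S : Set V)) / (S.card : ℝ) } := by
  apply Set.Finite.bddAbove
  apply (Set.finite_range (fun S : Finset V => specRad (G.induce (↑S : Set V)) / (S.card : ℝ))).subset
  rintro x ⟨S, -, rfl⟩
  exact ⟨S, rfl⟩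

lemma card_coe_real (S : Finset V) : (Fintype.card ↥(↑S : Set V) : ℝ) = (S.card : ℝ) := by
  simp

lemma clique_bound (S : Finset V) (hS : S.Nonempty) (hcl : G.IsClique (↑S : Set V)) :
    ((S.card : ℝ) - 1) / (S.card : ℝ) ≤ maxDensity G := by
  classical
  haveI : Nonempty ↥(↑S : Set V) := ⟨⟨hS.choose, by simpa using hS.choose_spec⟩⟩
  set H := G.induce (↑S : Set V) with hH
  haveI : DecidableRel H.Adj := Classical.decRel _
  have hc0 : (0:ℝ) < (S.card : ℝ) := by
    exact_mod_cast hS.card_pos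
  have hB : ∀ i, (adjMatrix_isHermitian H).eigenvalues i ≤ specRad H := by
    intro i
    rw [← adjEig_eq]
    exact adjEig_le_specRad H i
  have hq := quad_le_of_eig_le (adjMatrix_isHermitian H) hB (fun _ => (1:ℝ))
  have hAdj : ∀ a b : ↥(↑S : Set V), (H.adjMatrix ℝ) a b = if a = b then 0 else 1 := by
    intro a b
    by_cases hab : a = b
    · subst hab; simp [SimpleGraph.adjMatrix_apply]
    · rw [if_neg hab]
      have hadj : H.Adj a b := by
        have hne : (a : V) ≠ (b : V) := fun hh => hab (Subtype.ext hh)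
        have := hcl a.2 b.2 hne
        simpa [hH, SimpleGraph.comap_adj] using this
      simp [SimpleGraph.adjMatrix_apply, hadj]
  set c' : ℝ := (Fintype.card ↥(↑S : Set V) : ℝ) with hc'
  have hqval : quad (H.adjMatrix ℝ) (fun _ => (1:ℝ)) = c' * (c' - 1) := by
    unfold quad
    simp_rw [one_mul, mul_one, hAdj]
    have per : ∀ a : ↥(↑S : Set V), (∑ b, if a = b then (0:ℝ) else 1) = c' - 1 := by
      intro a
      have e : ∀ b : ↥(↑S : Set V), (if a = b then (0:ℝ) else 1)
          = 1 - (if a = b then (1:ℝ) else 0) := by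
        intro b; split <;> ring
      simp_rw [e, Finset.sum_sub_distrib, Finset.sum_ite_eq, Finset.sum_const]
      simp [Finset.card_univ, hc']
    simp_rw [per]
    rw [Finset.sum_const, nsmul_eq_mul, Finset.card_univ]
  have hsum1 : ∑ _u : ↥(↑S : Set V), (1:ℝ)^2 = c' := by
    simp [Finset.sum_const, Finset.card_univ, hc']
  rw [hqval, hsum1] at hq
  have hccast : c' = (S.card : ℝ) := card_coe_real S
  have hspec : (S.card : ℝ) - 1 ≤ specRad H := by nlinarith
  have hmem : specRad H / (S.card : ℝ) ∈ { x : ℝ | ∃ S' : Finset V, S'.Nonempty ∧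
      x = specRad (G.induce (↑S' : Set V)) / (S'.card : ℝ) } := ⟨S, hS, by rw [hH]⟩
  have hle := le_csSup (bddAbove_dens G) hmem
  calc ((S.card : ℝ) - 1) / (S.card : ℝ) ≤ specRad H / (S.card : ℝ) := by
        rw [div_eq_mul_inv, div_eq_mul_inv]
        exact mul_le_mul_of_nonneg_right hspec (by positivity)
    _ ≤ maxDensity G := hle

lemma maxDensity_lt_one [Nonempty V] : maxDensity G < 1 := by
  classical
  set D := { x : ℝ | ∃ S : Finset V, S.Nonempty ∧
      x = specRad (G.induce (↑S : Set V)) / (S.card : ℝ) } with hD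
  have hne : D.Nonempty := ⟨_, ⟨{Classical.arbitrary V}, Finset.singleton_nonempty _, rfl⟩⟩
  have hfin : D.Finite := by
    apply (Set.finite_range (fun S : Finset V =>
      specRad (G.induce (↑S : Set V)) / (S.card : ℝ))).subset
    rintro x ⟨S, -, rfl⟩
    exact ⟨S, rfl⟩
  have hmem : maxDensity G ∈ D := hne.csSup_mem hfin
  obtain ⟨S, hSne, hEq⟩ := hmem
  haveI : Nonempty ↥(↑S : Set V) := ⟨⟨hSne.choose, by simpa using hSne.choose_spec⟩⟩
  haveI : DecidableRel (G.induce (↑S : Set V)).Adj := Classical.decRel _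
  have h1 : specRad (G.induce (↑S : Set V)) ≤ (Fintype.card ↥(↑S : Set V) : ℝ) - 1 :=
    specRad_le_card_sub_one _
  rw [card_coe_real] at h1
  have hc0 : (0:ℝ) < (S.card : ℝ) := by exact_mod_cast hSne.card_pos
  rw [hEq]
  rw [div_lt_one hc0]
  linarith

end Density


section MS
variable [Fintype V] [DecidableEq V] (G : SimpleGraph V) [inst2 : DecidableRel G.Adj]

lemma adj_symm_real (u w : V) : (G.adjMatrix ℝ) u w = (G.adjMatrix ℝ) w u := by
  simp [SimpleGraph.adjMatrix_apply, G.adj_comm]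

lemma offdiag_bound (z : V → ℝ) (hz0 : ∀ u, 0 ≤ z u) :
    quad (G.adjMatrix ℝ) z ≤ (∑ u, z u)^2 - ∑ u, (z u)^2 := by
  have step1 : quad (G.adjMatrix ℝ) z ≤ ∑ u, ∑ w, (if u = w then 0 else z u * z w) := by
    refine Finset.sum_le_sum fun u _ => Finset.sum_le_sum fun w _ => ?_
    by_cases h : u = w
    · subst h; simp [SimpleGraph.adjMatrix_apply]
    · rw [if_neg h]
      have hA0 : (0:ℝ) ≤ (G.adjMatrix ℝ) u w := by
        simp only [SimpleGraph.adjMatrix_apply]; positivity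
      have hA1 : (G.adjMatrix ℝ) u w ≤ 1 := by
        simp only [SimpleGraph.adjMatrix_apply]; split <;> norm_num
      have hzz : (0:ℝ) ≤ z u * z w := mul_nonneg (hz0 u) (hz0 w)
      calc z u * (G.adjMatrix ℝ) u w * z w = (G.adjMatrix ℝ) u w * (z u * z w) := by ring
        _ ≤ 1 * (z u * z w) := mul_le_mul_of_nonneg_right hA1 hzz
        _ = z u * z w := one_mul _
  have step2 : ∑ u, ∑ w, (if u = w then 0 else z u * z w)
      = (∑ u, z u)^2 - ∑ u, (z u)^2 := by
    have per : ∀ u, ∑ w, (if u = w then 0 else z u * z w)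
        = z u * (∑ w, z w) - (z u)^2 := by
      intro u
      have e : ∀ w, (if u = w then (0:ℝ) else z u * z w)
          = z u * z w - (if u = w then z u * z w else 0) := by
        intro w; split <;> ring
      simp_rw [e, Finset.sum_sub_distrib, Finset.sum_ite_eq, Finset.mul_sum]
      simp [pow_two]
    simp_rw [per, Finset.sum_sub_distrib]
    congr 1
    rw [pow_two, ← Finset.sum_mul]
  exact le_of_le_of_eq step1 step2

lemma ms_clique (z : V → ℝ) (hz0 : ∀ u, 0 ≤ z u)
    (hcl : ∀ u, z u ≠ 0 → ∀ w, z w ≠ 0 → u ≠ w → G.Adj u w) :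
    quad (G.adjMatrix ℝ) z ≤ maxDensity G * (∑ u, z u)^2 := by
  classical
  set S : Finset V := univ.filter (fun u => z u ≠ 0) with hSdef
  by_cases hSe : S.Nonempty
  · have hc0 : (0:ℝ) < (S.card : ℝ) := by exact_mod_cast hSe.card_pos
    have hclS : G.IsClique (↑S : Set V) := by
      intro a ha b hb hab
      rw [Finset.mem_coe, hSdef, Finset.mem_filter] at ha hb
      exact hcl a ha.2 b hb.2 hab
    have key3 := clique_bound G S hSe hclS
    have hzS : ∑ u ∈ S, z u = ∑ u, z u := by
      apply Finset.sum_subset (Finset.subset_univ S)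
      intro x _ hx
      rw [hSdef, Finset.mem_filter] at hx
      push_neg at hx
      exact hx (Finset.mem_univ x)
    have hz2S : (∑ u ∈ S, z u)^2 ≤ (S.card : ℝ) * ∑ u ∈ S, (z u)^2 := by
      exact_mod_cast sq_sum_le_card_mul_sum_sq (s := S) (f := z)
    have hz2 : ∑ u ∈ S, (z u)^2 ≤ ∑ u, (z u)^2 :=
      Finset.sum_le_sum_of_subset_of_nonneg (Finset.subset_univ S)
        (fun u _ _ => sq_nonneg _)
    set P : ℝ := (∑ u, z u)^2 with hP
    set Q : ℝ := ∑ u, (z u)^2 with hQ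
    have hPQ : P ≤ (S.card : ℝ) * Q := by
      rw [hP, ← hzS]
      calc (∑ u ∈ S, z u)^2 ≤ (S.card : ℝ) * ∑ u ∈ S, (z u)^2 := hz2S
        _ ≤ (S.card : ℝ) * Q := mul_le_mul_of_nonneg_left hz2 (le_of_lt hc0)
    have hQdiv : P / (S.card : ℝ) ≤ Q := by
      rw [div_le_iff₀ hc0, mul_comm]
      exact hPQ
    have h1 := offdiag_bound G z hz0
    have hfrac : P - P / (S.card : ℝ) = (((S.card : ℝ) - 1) / (S.card : ℝ)) * P := by
      field_simp
    have hlast : (((S.card : ℝ) - 1) / (S.card : ℝ)) * P ≤ maxDensity G * P :=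
      mul_le_mul_of_nonneg_right key3 (sq_nonneg _)
    calc quad (G.adjMatrix ℝ) z ≤ P - Q := h1
      _ ≤ P - P / (S.card : ℝ) := by linarith
      _ = (((S.card : ℝ) - 1) / (S.card : ℝ)) * P := hfrac
      _ ≤ maxDensity G * P := hlast
  · have hz : ∀ u, z u = 0 := by
      intro u
      by_contra h
      exact hSe ⟨u, by rw [hSdef, Finset.mem_filter]; exact ⟨Finset.mem_univ u, h⟩⟩
    simp [quad, hz]

lemma ms_step (z : V → ℝ) (hz0 : ∀ u, 0 ≤ z u) (u₀ w₀ : V)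
    (hu₀ : z u₀ ≠ 0) (hne : u₀ ≠ w₀) (hnadj : ¬ G.Adj u₀ w₀)
    (hdir : ∑ w, (G.adjMatrix ℝ) w₀ w * z w ≤ ∑ w, (G.adjMatrix ℝ) u₀ w * z w) :
    ∃ z' : V → ℝ, (∀ u, 0 ≤ z' u) ∧ (∑ u, z' u = ∑ u, z u) ∧
      (univ.filter (fun u => z' u ≠ 0)) ⊆ (univ.filter (fun u => z u ≠ 0)).erase w₀ ∧
      quad (G.adjMatrix ℝ) z ≤ quad (G.adjMatrix ℝ) z' := by
  classical
  have hwu : ¬ (w₀ = u₀) := fun h => hne h.symm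
  set s : ℝ := z w₀ with hs
  set e : V → ℝ := fun u => if u = u₀ then 1 else if u = w₀ then -1 else 0 with he
  set z' : V → ℝ := fun u => z u + s * e u with hz'
  have heu₀ : e u₀ = 1 := by rw [he]; simp [hne]
  have hew₀ : e w₀ = -1 := by rw [he]; simp [hwu]
  have hesplit : ∀ u, e u = (if u = u₀ then (1:ℝ) else 0) - (if u = w₀ then 1 else 0) := by
    intro u
    rw [he]
    by_cases h1 : u = u₀
    · subst h1; simp [hne]
    · by_cases h2 : u = w₀
      · subst h2; simp [hwu]
      · simp [h1, h2]
  have hz'w₀ : z' w₀ = 0 := by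
    rw [hz']; simp only; rw [hew₀, hs]; ring
  have hz'u : ∀ u, u ≠ u₀ → u ≠ w₀ → z' u = z u := by
    intro u h1 h2
    rw [hz']; simp only [he]; simp [h1, h2]
  have hz'u₀ : z' u₀ = z u₀ + s := by
    rw [hz']; simp only; rw [heu₀]; ring
  refine ⟨z', ?_, ?_, ?_, ?_⟩
  · intro u
    by_cases h1 : u = u₀
    · rw [h1, hz'u₀, hs]
      have := hz0 u₀; have := hz0 w₀
      linarith
    · by_cases h2 : u = w₀
      · rw [h2, hz'w₀]
      · rw [hz'u u h1 h2]; exact hz0 u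
  · have h0 : ∑ u, e u = 0 := by
      simp_rw [hesplit, Finset.sum_sub_distrib]
      simp
    have hsum : ∑ u, z' u = ∑ u, z u + s * ∑ u, e u := by
      rw [Finset.mul_sum, ← Finset.sum_add_distrib]
    rw [hsum, h0, mul_zero, add_zero]
  · intro u hu
    rw [Finset.mem_filter] at hu
    have hu' := hu.2
    have hunw : u ≠ w₀ := by
      intro h; subst h; exact hu' hz'w₀
    rw [Finset.mem_erase]
    refine ⟨hunw, Finset.mem_filter.mpr ⟨Finset.mem_univ u, ?_⟩⟩
    by_cases h1 : u = u₀
    · rw [h1]; exact hu₀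
    · rw [← hz'u u h1 hunw]; exact hu'
  · -- quad A z ≤ quad A z'
    have hexp : quad (G.adjMatrix ℝ) z' = quad (G.adjMatrix ℝ) z
        + 2 * s * (∑ u, e u * ∑ w, (G.adjMatrix ℝ) u w * z w)
        + s^2 * (∑ u, ∑ w, e u * (G.adjMatrix ℝ) u w * e w) := by
      unfold quad
      have per : ∀ u w, z' u * (G.adjMatrix ℝ) u w * z' w
          = z u * (G.adjMatrix ℝ) u w * z w + s * (e u * ((G.adjMatrix ℝ) u w * z w))
            + s * (z u * ((G.adjMatrix ℝ) u w * e w))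
            + s^2 * (e u * (G.adjMatrix ℝ) u w * e w) := by
        intro u w
        rw [hz']
        ring
      simp_rw [per, Finset.sum_add_distrib]
      have e1 : ∑ u, ∑ w, s * (e u * ((G.adjMatrix ℝ) u w * z w))
          = s * ∑ u, e u * ∑ w, (G.adjMatrix ℝ) u w * z w := by
        rw [Finset.mul_sum]
        refine Finset.sum_congr rfl fun u _ => ?_
        rw [Finset.mul_sum, Finset.mul_sum]
        try exact Finset.sum_congr rfl fun w _ => by ring
      have e2 : ∑ u, ∑ w, s * (z u * ((G.adjMatrix ℝ) u w * e w))
          = s * ∑ u, e u * ∑ w, (G.adjMatrix ℝ) u w * z w := by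
        rw [Finset.sum_comm, Finset.mul_sum]
        refine Finset.sum_congr rfl fun w _ => ?_
        rw [Finset.mul_sum, Finset.mul_sum]
        refine Finset.sum_congr rfl fun u _ => ?_
        rw [adj_symm_real G u w]
        ring
      have e3 : ∑ u, ∑ w, s^2 * (e u * (G.adjMatrix ℝ) u w * e w)
          = s^2 * ∑ u, ∑ w, e u * (G.adjMatrix ℝ) u w * e w := by
        rw [Finset.mul_sum]
        refine Finset.sum_congr rfl fun u _ => ?_
        rw [Finset.mul_sum]
      rw [e1, e2, e3]
      ring
    have hA1 : (G.adjMatrix ℝ) u₀ w₀ = 0 := by simp [SimpleGraph.adjMatrix_apply, hnadj]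
    have hA2 : (G.adjMatrix ℝ) w₀ u₀ = 0 := by
      have : ¬ G.Adj w₀ u₀ := fun h => hnadj ((G.adj_comm u₀ w₀).mpr h)
      simp [SimpleGraph.adjMatrix_apply, this]
    have hA3 : (G.adjMatrix ℝ) u₀ u₀ = 0 := by simp [SimpleGraph.adjMatrix_apply]
    have hA4 : (G.adjMatrix ℝ) w₀ w₀ = 0 := by simp [SimpleGraph.adjMatrix_apply]
    have hqe : ∑ u, ∑ w, e u * (G.adjMatrix ℝ) u w * e w = 0 := by
      have per : ∀ u, ∑ w, e u * (G.adjMatrix ℝ) u w * e w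
          = e u * ((G.adjMatrix ℝ) u u₀ - (G.adjMatrix ℝ) u w₀) := by
        intro u
        have h' : ∀ w, e u * (G.adjMatrix ℝ) u w * e w
            = (if w = u₀ then e u * (G.adjMatrix ℝ) u w else 0)
              - (if w = w₀ then e u * (G.adjMatrix ℝ) u w else 0) := by
          intro w
          rw [hesplit w]
          split_ifs <;> ring
        simp_rw [h', Finset.sum_sub_distrib, Finset.sum_ite_eq']
        simp only [Finset.mem_univ, if_true]
        try ring
      simp_rw [per]
      have h'' : ∀ u, e u * ((G.adjMatrix ℝ) u u₀ - (G.adjMatrix ℝ) u w₀)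
          = (if u = u₀ then ((G.adjMatrix ℝ) u u₀ - (G.adjMatrix ℝ) u w₀) else 0)
            - (if u = w₀ then ((G.adjMatrix ℝ) u u₀ - (G.adjMatrix ℝ) u w₀) else 0) := by
        intro u
        rw [hesplit u]
        split_ifs <;> ring
      simp_rw [h'', Finset.sum_sub_distrib, Finset.sum_ite_eq']
      simp only [Finset.mem_univ, if_true]
      rw [hA1, hA2, hA3, hA4]
      ring
    have hsumeF : ∑ u, e u * ∑ w, (G.adjMatrix ℝ) u w * z w
        = (∑ w, (G.adjMatrix ℝ) u₀ w * z w) - (∑ w, (G.adjMatrix ℝ) w₀ w * z w) := by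
      have h3 : ∀ u, e u * ∑ w, (G.adjMatrix ℝ) u w * z w
          = (if u = u₀ then (∑ w, (G.adjMatrix ℝ) u w * z w) else 0)
            - (if u = w₀ then (∑ w, (G.adjMatrix ℝ) u w * z w) else 0) := by
        intro u
        rw [hesplit u]
        split_ifs <;> ring
      simp_rw [h3, Finset.sum_sub_distrib, Finset.sum_ite_eq']
      simp only [Finset.mem_univ, if_true]
    rw [hexp, hqe, hsumeF, mul_zero, add_zero]
    have hs0 : 0 ≤ s := hz0 w₀
    nlinarith [hdir]

lemma ms_aux : ∀ N : ℕ, ∀ z : V → ℝ, (∀ u, 0 ≤ z u) →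
    (univ.filter (fun u => z u ≠ 0)).card ≤ N →
    quad (G.adjMatrix ℝ) z ≤ maxDensity G * (∑ u, z u)^2 := by
  intro N
  induction N with
  | zero =>
    intro z hz0 hcard
    have hz : ∀ u, z u = 0 := by
      intro u
      by_contra h
      have : u ∈ univ.filter (fun u => z u ≠ 0) := Finset.mem_filter.mpr ⟨Finset.mem_univ u, h⟩
      have := Finset.card_pos.mpr ⟨u, this⟩
      omega
    simp [quad, hz]
  | succ N ih =>
    intro z hz0 hcard
    by_cases hcl : ∀ u, z u ≠ 0 → ∀ w, z w ≠ 0 → u ≠ w → G.Adj u w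
    · exact ms_clique G z hz0 hcl
    · push_neg at hcl
      obtain ⟨u₀, hu₀, w₀, hw₀, hne, hnadj⟩ := hcl
      have hstep : ∃ z' : V → ℝ, (∀ u, 0 ≤ z' u) ∧ (∑ u, z' u = ∑ u, z u) ∧
          (univ.filter (fun u => z' u ≠ 0)) ⊆ (univ.filter (fun u => z u ≠ 0)).erase w₀ ∧
          quad (G.adjMatrix ℝ) z ≤ quad (G.adjMatrix ℝ) z' ∨
          (∀ u, 0 ≤ z' u) ∧ (∑ u, z' u = ∑ u, z u) ∧
          (univ.filter (fun u => z' u ≠ 0)) ⊆ (univ.filter (fun u => z u ≠ 0)).erase u₀ ∧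
          quad (G.adjMatrix ℝ) z ≤ quad (G.adjMatrix ℝ) z' := by
        rcases le_total (∑ w, (G.adjMatrix ℝ) w₀ w * z w) (∑ w, (G.adjMatrix ℝ) u₀ w * z w)
          with hdir | hdir
        · obtain ⟨z', h1, h2, h3, h4⟩ := ms_step G z hz0 u₀ w₀ hu₀ hne hnadj hdir
          exact ⟨z', Or.inl ⟨h1, h2, h3, h4⟩⟩
        · have hnadj' : ¬ G.Adj w₀ u₀ := fun h => hnadj (G.adj_comm u₀ w₀ |>.mpr h)
          obtain ⟨z', h1, h2, h3, h4⟩ := ms_step G z hz0 w₀ u₀ hw₀ hne.symm hnadj' hdir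
          exact ⟨z', Or.inr ⟨h1, h2, h3, h4⟩⟩
      obtain ⟨z', hcase⟩ := hstep
      have hget : (∀ u, 0 ≤ z' u) ∧ (∑ u, z' u = ∑ u, z u) ∧
          (univ.filter (fun u => z' u ≠ 0)).card ≤ N ∧
          quad (G.adjMatrix ℝ) z ≤ quad (G.adjMatrix ℝ) z' := by
        rcases hcase with ⟨h1, h2, h3, h4⟩ | ⟨h1, h2, h3, h4⟩
        · refine ⟨h1, h2, ?_, h4⟩
          have hw₀mem : w₀ ∈ univ.filter (fun u => z u ≠ 0) :=
            Finset.mem_filter.mpr ⟨Finset.mem_univ w₀, hw₀⟩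
          have := Finset.card_le_card h3
          rw [Finset.card_erase_of_mem hw₀mem] at this
          omega
        · refine ⟨h1, h2, ?_, h4⟩
          have hu₀mem : u₀ ∈ univ.filter (fun u => z u ≠ 0) :=
            Finset.mem_filter.mpr ⟨Finset.mem_univ u₀, hu₀⟩
          have := Finset.card_le_card h3
          rw [Finset.card_erase_of_mem hu₀mem] at this
          omega
      obtain ⟨h1, h2, h3, h4⟩ := hget
      calc quad (G.adjMatrix ℝ) z ≤ quad (G.adjMatrix ℝ) z' := h4
        _ ≤ maxDensity G * (∑ u, z' u)^2 := ih z' h1 h3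
        _ = maxDensity G * (∑ u, z u)^2 := by rw [h2]

lemma ms (z : V → ℝ) (hz0 : ∀ u, 0 ≤ z u) :
    quad (G.adjMatrix ℝ) z ≤ maxDensity G * (∑ u, z u)^2 :=
  ms_aux G (univ.filter (fun u => z u ≠ 0)).card z hz0 le_rfl

end MS


section Core
variable [Fintype V] [DecidableEq V] (G : SimpleGraph V) [inst3 : DecidableRel G.Adj]

lemma quadL_le_card (x : V → ℝ) :
    quad (G.lapMatrix ℝ) x ≤ (Fintype.card V : ℝ) * ∑ u, (x u)^2 := by
  rw [quadL_decomp G x]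
  have hI2 : ∑ u, (∑ w, (G.adjMatrix ℝ) u w) * (x u)^2 - quad (G.adjMatrix ℝ) x
      = (∑ u, ∑ w, (G.adjMatrix ℝ) u w * (x u - x w)^2) / 2 := by
    have per : ∀ u w, (G.adjMatrix ℝ) u w * (x u - x w)^2
        = (G.adjMatrix ℝ) u w * (x u)^2 + (G.adjMatrix ℝ) u w * (x w)^2
          - 2 * (x u * (G.adjMatrix ℝ) u w * x w) := by
      intro u w; ring
    simp_rw [per, Finset.sum_sub_distrib, Finset.sum_add_distrib]
    have e1 : ∑ u, ∑ w, (G.adjMatrix ℝ) u w * (x u)^2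
        = ∑ u, (∑ w, (G.adjMatrix ℝ) u w) * (x u)^2 := by
      refine Finset.sum_congr rfl fun u _ => ?_
      rw [Finset.sum_mul]
    have e2 : ∑ u, ∑ w, (G.adjMatrix ℝ) u w * (x w)^2
        = ∑ u, (∑ w, (G.adjMatrix ℝ) u w) * (x u)^2 := by
      rw [Finset.sum_comm]
      refine Finset.sum_congr rfl fun u _ => ?_
      rw [Finset.sum_mul]
      refine Finset.sum_congr rfl fun w _ => ?_
      rw [adj_symm_real G u w]
    have e3 : ∑ u, ∑ w, 2 * (x u * (G.adjMatrix ℝ) u w * x w)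
        = 2 * quad (G.adjMatrix ℝ) x := by
      unfold quad
      rw [Finset.mul_sum]
      refine Finset.sum_congr rfl fun u _ => ?_
      rw [Finset.mul_sum]
    rw [e1, e2, e3]
    ring
  rw [hI2]
  have hI3 : ∑ u, ∑ w, (G.adjMatrix ℝ) u w * (x u - x w)^2
      ≤ ∑ u, ∑ w, (x u - x w)^2 := by
    refine Finset.sum_le_sum fun u _ => Finset.sum_le_sum fun w _ => ?_
    have hA1 : (G.adjMatrix ℝ) u w ≤ 1 := by
      simp only [SimpleGraph.adjMatrix_apply]; split <;> norm_num
    have := sq_nonneg (x u - x w)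
    nlinarith
  have hI4 : ∑ u, ∑ w, (x u - x w)^2
      = 2 * (Fintype.card V : ℝ) * ∑ u, (x u)^2 - 2 * (∑ u, x u)^2 := by
    have per : ∀ u w, (x u - x w)^2 = (x u)^2 + (x w)^2 - 2 * (x u * x w) := by
      intro u w; ring
    simp_rw [per, Finset.sum_sub_distrib, Finset.sum_add_distrib, Finset.sum_const,
      Finset.card_univ, nsmul_eq_mul, ← Finset.mul_sum, ← Finset.sum_mul]
    rw [pow_two]
    ring
  have hfin : (∑ u, ∑ w, (x u - x w)^2) / 2 ≤ (Fintype.card V : ℝ) * ∑ u, (x u)^2 := by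
    rw [hI4]
    have := sq_nonneg (∑ u, x u)
    linarith
  linarith

lemma lapEig_le_card (i : V) : lapEig G i ≤ (Fintype.card V : ℝ) := by
  rw [lapEig_eq G]
  rw [← quad_eB (lapMatrix_isHermitian G) i]
  have h := quadL_le_card G (fun u => (lapMatrix_isHermitian G).eigenvectorBasis i u)
  have hnorm : ∑ u, ((lapMatrix_isHermitian G).eigenvectorBasis i u)^2 = 1 := by
    have := sum_self_eB (lapMatrix_isHermitian G) i
    simpa [pow_two] using this
  rw [hnorm, mul_one] at h
  exact h

lemma sLap_nonempty_set (k : ℕ) (hk2 : k ≤ Fintype.card V) :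
    ∃ T : Finset V, T.card = k := by
  obtain ⟨T, _, hT⟩ := Finset.exists_subset_card_eq (s := (univ : Finset V)) (n := k) (by simpa using hk2)
  exact ⟨T, hT⟩

lemma sLap_le_nk (k : ℕ) (hk2 : k ≤ Fintype.card V) :
    sLap G k ≤ (k : ℝ) * (Fintype.card V : ℝ) := by
  obtain ⟨T₀, hT₀⟩ := sLap_nonempty_set (V := V) k hk2
  refine csSup_le ⟨∑ i ∈ T₀, lapEig G i, T₀, hT₀, rfl⟩ ?_
  rintro x ⟨T, hT, rfl⟩
  calc ∑ i ∈ T, lapEig G i ≤ ∑ _i ∈ T, (Fintype.card V : ℝ) :=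
        Finset.sum_le_sum fun i _ => lapEig_le_card G i
    _ = (k : ℝ) * (Fintype.card V : ℝ) := by
        rw [Finset.sum_const, hT, nsmul_eq_mul]

lemma sLap_le_main (k : ℕ) (hk2 : k ≤ Fintype.card V) :
    sLap G k ≤ (numEdges G : ℝ) + maxDensity G * (k:ℝ)^2 / 2
      + Real.sqrt (2 * (numEdges G : ℝ) * (k:ℝ)) := by
  obtain ⟨T₀, hT₀⟩ := sLap_nonempty_set (V := V) k hk2
  refine csSup_le ⟨∑ i ∈ T₀, lapEig G i, T₀, hT₀, rfl⟩ ?_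
  rintro x ⟨T, hT, rfl⟩
  set hL := lapMatrix_isHermitian G with hhL
  set z : V → ℝ := fun u => ∑ i ∈ T, (hL.eigenvectorBasis i u)^2 with hz
  have hz0 : ∀ u, 0 ≤ z u := fun u => Finset.sum_nonneg fun i _ => sq_nonneg _
  have hz1 : ∀ u, z u ≤ 1 := by
    intro u
    rw [hz]
    calc ∑ i ∈ T, (hL.eigenvectorBasis i u)^2 ≤ ∑ i, (hL.eigenvectorBasis i u)^2 :=
          Finset.sum_le_sum_of_subset_of_nonneg (Finset.subset_univ T)
            (fun i _ _ => sq_nonneg _)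
      _ = 1 := by
          have := eB_rows hL u u
          simp only [if_pos rfl] at this
          simpa [pow_two] using this
  have hzsum : ∑ u, z u = (k : ℝ) := by
    rw [hz]
    rw [Finset.sum_comm]
    have per : ∀ i, ∑ u, (hL.eigenvectorBasis i u)^2 = 1 := by
      intro i
      have := sum_self_eB hL i
      simpa [pow_two] using this
    simp_rw [per]
    rw [Finset.sum_const, hT, nsmul_eq_mul, mul_one]
  have hdecomp : ∑ i ∈ T, lapEig G i
      = ∑ u, (∑ w, (G.adjMatrix ℝ) u w) * z u
        - ∑ i ∈ T, quad (G.adjMatrix ℝ) (fun u => hL.eigenvectorBasis i u) := by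
    have c1 : ∀ i, lapEig G i = quad (G.lapMatrix ℝ) (fun u => hL.eigenvectorBasis i u) := by
      intro i
      rw [lapEig_eq G, ← quad_eB hL i, hhL]
    simp_rw [c1, quadL_decomp G]
    rw [Finset.sum_sub_distrib]
    congr 1
    rw [Finset.sum_comm]
    refine Finset.sum_congr rfl fun u _ => ?_
    rw [hz, Finset.mul_sum]
  have c5 : ∑ u, (∑ w, (G.adjMatrix ℝ) u w) * z u
      ≤ (numEdges G : ℝ) + quad (G.adjMatrix ℝ) z / 2 := deg_quad G z hz0 hz1
  have c6 : quad (G.adjMatrix ℝ) z ≤ maxDensity G * (k:ℝ)^2 := by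
    have := ms G z hz0
    rw [hzsum] at this
    exact this
  have c7 : - ∑ i ∈ T, quad (G.adjMatrix ℝ) (fun u => hL.eigenvectorBasis i u)
      ≤ Real.sqrt (2 * (numEdges G : ℝ) * (k:ℝ)) := by
    set qa : V → ℝ := fun i => quad (G.adjMatrix ℝ) (fun u => hL.eigenvectorBasis i u) with hqa
    have hCS : (∑ i ∈ T, qa i)^2 ≤ (k:ℝ) * ∑ i ∈ T, (qa i)^2 := by
      have := sq_sum_le_card_mul_sum_sq (s := T) (f := qa)
      rw [hT] at this
      exact_mod_cast this
    have hper : ∀ i, (qa i)^2 ≤ ∑ u, (∑ w, (G.adjMatrix ℝ) u w * hL.eigenvectorBasis i w)^2 := by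
      intro i
      have hq : qa i = ∑ u, hL.eigenvectorBasis i u
          * (∑ w, (G.adjMatrix ℝ) u w * hL.eigenvectorBasis i w) := by
        rw [hqa]
        unfold quad
        refine Finset.sum_congr rfl fun u _ => ?_
        rw [Finset.mul_sum]
        exact Finset.sum_congr rfl fun w _ => by ring
      rw [hq]
      calc (∑ u, hL.eigenvectorBasis i u
              * (∑ w, (G.adjMatrix ℝ) u w * hL.eigenvectorBasis i w))^2
          ≤ (∑ u, (hL.eigenvectorBasis i u)^2)
            * ∑ u, (∑ w, (G.adjMatrix ℝ) u w * hL.eigenvectorBasis i w)^2 :=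
            Finset.sum_mul_sq_le_sq_mul_sq _ _ _
        _ = ∑ u, (∑ w, (G.adjMatrix ℝ) u w * hL.eigenvectorBasis i w)^2 := by
            have hn : ∑ u, (hL.eigenvectorBasis i u)^2 = 1 := by
              have := sum_self_eB hL i
              simpa [pow_two] using this
            rw [hn, one_mul]
    have hfro : ∑ i, ∑ u, (∑ w, (G.adjMatrix ℝ) u w * hL.eigenvectorBasis i w)^2
        = 2 * (numEdges G : ℝ) := by
      rw [frob (fun i u => hL.eigenvectorBasis i u) (eB_rows hL) (G.adjMatrix ℝ)]
      rw [← sum_adj_eq_twice_numEdges G]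
      refine Finset.sum_congr rfl fun u _ => Finset.sum_congr rfl fun w _ => ?_
      simp only [SimpleGraph.adjMatrix_apply]
      split <;> norm_num
    have hsum2 : ∑ i ∈ T, (qa i)^2 ≤ 2 * (numEdges G : ℝ) := by
      calc ∑ i ∈ T, (qa i)^2
          ≤ ∑ i ∈ T, ∑ u, (∑ w, (G.adjMatrix ℝ) u w * hL.eigenvectorBasis i w)^2 :=
            Finset.sum_le_sum fun i _ => hper i
        _ ≤ ∑ i, ∑ u, (∑ w, (G.adjMatrix ℝ) u w * hL.eigenvectorBasis i w)^2 :=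
            Finset.sum_le_sum_of_subset_of_nonneg (Finset.subset_univ T)
              (fun i _ _ => Finset.sum_nonneg fun u _ => sq_nonneg _)
        _ = 2 * (numEdges G : ℝ) := hfro
    have hsq : (∑ i ∈ T, qa i)^2 ≤ 2 * (numEdges G : ℝ) * (k:ℝ) := by
      calc (∑ i ∈ T, qa i)^2 ≤ (k:ℝ) * ∑ i ∈ T, (qa i)^2 := hCS
        _ ≤ (k:ℝ) * (2 * (numEdges G : ℝ)) :=
            mul_le_mul_of_nonneg_left hsum2 (by positivity)
        _ = 2 * (numEdges G : ℝ) * (k:ℝ) := by ring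
    have habs : |∑ i ∈ T, qa i| ≤ Real.sqrt (2 * (numEdges G : ℝ) * (k:ℝ)) := by
      rw [← Real.sqrt_sq_eq_abs]
      exact Real.sqrt_le_sqrt hsq
    calc - ∑ i ∈ T, qa i ≤ |∑ i ∈ T, qa i| := neg_le_abs _
      _ ≤ Real.sqrt (2 * (numEdges G : ℝ) * (k:ℝ)) := habs
  rw [hdecomp]
  have := c7
  linarith

end Core

/-- `BC_k(G)` holds if `k ≥ √(8n)/(1-t)`; equivalently, any `k` at which
`BC_k(G)` fails satisfies `m/n < k < √(8n)/(1-t)`. -/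
theorem bc_of_sqrt_eight_n {V : Type*} [Fintype V] [DecidableEq V] (G : SimpleGraph V)
    (k : ℕ) (hk1 : 1 ≤ k) (hk2 : k ≤ Fintype.card V) :
    (Real.sqrt (8 * Fintype.card V) / (1 - maxDensity G) ≤ (k : ℝ) → BC G k) ∧
    (¬ BC G k → (numEdges G : ℝ) / (Fintype.card V : ℝ) < (k : ℝ) ∧
      (k : ℝ) < Real.sqrt (8 * Fintype.card V) / (1 - maxDensity G)) := by
  classical
  have hn1 : 1 ≤ Fintype.card V := le_trans hk1 hk2
  haveI : Nonempty V := Fintype.card_pos_iff.mp (by omega)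
  have ht1 : maxDensity G < 1 := maxDensity_lt_one G
  have hkR : (1:ℝ) ≤ (k:ℝ) := by exact_mod_cast hk1
  have hknR : (k:ℝ) ≤ (Fintype.card V : ℝ) := by exact_mod_cast hk2
  have hn0 : (0:ℝ) < (Fintype.card V : ℝ) := by
    have : 0 < Fintype.card V := by omega
    exact_mod_cast this
  have hchoose : (((k+1).choose 2 : ℕ) : ℝ) = (k:ℝ)*((k:ℝ)+1)/2 := by
    rw [Nat.cast_choose_two]
    push_cast
    ring
  have hm0 : (0:ℝ) ≤ (numEdges G : ℝ) := Nat.cast_nonneg _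
  have h1t : 0 < 1 - maxDensity G := by linarith
  have part1 : Real.sqrt (8 * Fintype.card V) / (1 - maxDensity G) ≤ (k : ℝ) → BC G k := by
    intro hyp
    by_contra hBC
    have hlt : (numEdges G : ℝ) + (((k+1).choose 2 : ℕ) : ℝ) < sLap G k := by
      simp only [BC, not_le] at hBC
      exact_mod_cast hBC
    have hm_nk : (numEdges G : ℝ) < (k:ℝ) * (Fintype.card V : ℝ) := by
      have h1 := sLap_le_nk G k hk2
      have h2 : (0:ℝ) ≤ (((k+1).choose 2 : ℕ):ℝ) := Nat.cast_nonneg _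
      linarith
    have hsq : Real.sqrt (8 * (Fintype.card V:ℝ)) ≤ (k:ℝ) * (1 - maxDensity G) := by
      rw [div_le_iff₀ h1t] at hyp
      exact hyp
    have hsplit : Real.sqrt (8 * (Fintype.card V:ℝ))
        = 2 * Real.sqrt (2 * (Fintype.card V:ℝ)) := by
      rw [show (8:ℝ) * (Fintype.card V:ℝ) = 2^2 * (2 * (Fintype.card V:ℝ)) by ring]
      rw [Real.sqrt_mul (by positivity) _]
      rw [Real.sqrt_sq (by norm_num)]
    have hs2n : Real.sqrt (2 * (Fintype.card V:ℝ)) ≤ (k:ℝ) * (1 - maxDensity G) / 2 := by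
      rw [hsplit] at hsq
      linarith
    have hmain := sLap_le_main G k hk2
    have hsqrtm : Real.sqrt (2 * (numEdges G:ℝ) * (k:ℝ))
        ≤ Real.sqrt (2 * (Fintype.card V:ℝ)) * (k:ℝ) := by
      have hle : 2 * (numEdges G:ℝ) * (k:ℝ) ≤ (2 * (Fintype.card V:ℝ)) * (k:ℝ)^2 := by
        nlinarith
      calc Real.sqrt (2 * (numEdges G:ℝ) * (k:ℝ))
          ≤ Real.sqrt ((2 * (Fintype.card V:ℝ)) * (k:ℝ)^2) := Real.sqrt_le_sqrt hle
        _ = Real.sqrt (2 * (Fintype.card V:ℝ)) * (k:ℝ) := by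
            rw [Real.sqrt_mul (by positivity), Real.sqrt_sq (by positivity)]
    have hfin : Real.sqrt (2 * (numEdges G:ℝ) * (k:ℝ))
        ≤ ((k:ℝ) * (1 - maxDensity G) / 2) * (k:ℝ) := by
      calc Real.sqrt (2 * (numEdges G:ℝ) * (k:ℝ))
          ≤ Real.sqrt (2*(Fintype.card V:ℝ)) * (k:ℝ) := hsqrtm
        _ ≤ ((k:ℝ)*(1-maxDensity G)/2) * (k:ℝ) :=
            mul_le_mul_of_nonneg_right hs2n (by positivity)
    have hexpand : ((k:ℝ)*(1-maxDensity G)/2)*(k:ℝ)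
        = (k:ℝ)^2/2 - maxDensity G * (k:ℝ)^2/2 := by ring
    have hfinal : sLap G k ≤ (numEdges G:ℝ) + (((k+1).choose 2:ℕ):ℝ) := by
      rw [hchoose]
      nlinarith [hmain, hfin, hexpand, hkR]
    linarith
  refine ⟨part1, fun hBC => ⟨?_, ?_⟩⟩
  · have hlt : (numEdges G : ℝ) + (((k+1).choose 2 : ℕ) : ℝ) < sLap G k := by
      simp only [BC, not_le] at hBC
      exact_mod_cast hBC
    have h1 := sLap_le_nk G k hk2
    have h2 : (0:ℝ) ≤ (((k+1).choose 2:ℕ):ℝ) := Nat.cast_nonneg _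
    rw [div_lt_iff₀ hn0]
    linarith
  · by_contra hge
    push_neg at hge
    exact hBC (part1 hge)

end Brouwer
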